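/- Let H = H_1 + H_2 be a sum of two Hermitian operators on a finite-dimensional Hilbert space H = S ⊕ S^⊥, where H_2 vanishes on S (S is contained in the zero eigenspace of H_2) and every eigenvalue of H_2 on S^⊥ is at least J, with J > 2K where K = ‖H_1‖ (operator norm). Let a be the smallest eigenvalue of the restriction Π_S H Π_S to S, and a' the smallest eigenvalue of H. Then a - K²/(J - 2K) ≤ a' ≤ a. -/

import Mathlib

local notation "⟪" x ", " y "⟫" => @inner ℂ _ _ x y

set_option maxHeartbeats 1000000 in
/-- **Leakage lemma, ground energy part.** Let `H = H₁ + H₂` be a sum of two Hermitian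
operators on a finite-dimensional Hilbert space, where `H₂` vanishes on a subspace `S`
and is at least `J` on `Sᗮ`, with `J > 2K`, `K = ‖H₁‖`. If `a` is the smallest
eigenvalue of the restriction `Π_S H Π_S` to `S` (characterized as the minimum of the
Rayleigh quotient over unit vectors of `S`) and `a'` the smallest eigenvalue of `H`,
then `a - K²/(J - 2K) ≤ a' ≤ a`. -/
theorem leakage_lemma_ground_energy (n : ℕ)
    (H₁ H₂ : EuclideanSpace ℂ (Fin n) →L[ℂ] EuclideanSpace ℂ (Fin n))
    (hH₁ : IsSelfAdjoint H₁) (hH₂ : IsSelfAdjoint H₂)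
    (S : Submodule ℂ (EuclideanSpace ℂ (Fin n)))
    (hS : ∀ x ∈ S, H₂ x = 0)
    (J K : ℝ) (hK : K = ‖H₁‖) (hJ : 2 * K < J)
    (hSperp : ∀ x ∈ Sᗮ, J * ‖x‖ ^ 2 ≤ (inner ℂ x (H₂ x) : ℂ).re)
    (a a' : ℝ)
    (ha_min : ∀ x ∈ S, ‖x‖ = 1 → a ≤ (inner ℂ x ((H₁ + H₂) x) : ℂ).re)
    (ha_mem : ∃ x ∈ S, ‖x‖ = 1 ∧ (inner ℂ x ((H₁ + H₂) x) : ℂ).re = a)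
    (ha'_min : ∀ x : EuclideanSpace ℂ (Fin n), ‖x‖ = 1 →
      a' ≤ (inner ℂ x ((H₁ + H₂) x) : ℂ).re)
    (ha'_mem : ∃ x : EuclideanSpace ℂ (Fin n), ‖x‖ = 1 ∧
      (inner ℂ x ((H₁ + H₂) x) : ℂ).re = a') :
    a - K ^ 2 / (J - 2 * K) ≤ a' ∧ a' ≤ a := by
  obtain ⟨x₀, hx₀S, hx₀n, hx₀a⟩ := ha_mem
  obtain ⟨x, hxn, hxa⟩ := ha'_mem
  have hK0 : 0 ≤ K := hK ▸ norm_nonneg _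
  have hJ' : 0 < J - 2 * K := by linarith
  -- upper bound
  have hupper : a' ≤ a := hx₀a ▸ ha'_min x₀ hx₀n
  -- a ≤ K
  have haK : a ≤ K := by
    have h2 : H₂ x₀ = 0 := hS x₀ hx₀S
    have : (⟪x₀, (H₁ + H₂) x₀⟫).re = (⟪x₀, H₁ x₀⟫).re := by
      simp [ContinuousLinearMap.add_apply, h2, inner_add_right]
    have hb : (⟪x₀, H₁ x₀⟫).re ≤ K := by
      calc (⟪x₀, H₁ x₀⟫).re ≤ ‖(⟪x₀, H₁ x₀⟫ : ℂ)‖ := Complex.re_le_norm _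
        _ ≤ ‖x₀‖ * ‖H₁ x₀‖ := norm_inner_le_norm _ _
        _ ≤ ‖x₀‖ * (‖H₁‖ * ‖x₀‖) := by
            gcongr; exact H₁.le_opNorm x₀
        _ = K := by rw [hx₀n, hK]; ring
    linarith [hx₀a ▸ this ▸ hb]
  refine ⟨?_, hupper⟩
  -- decompose x
  obtain ⟨y, hyS, z, hzS, rfl⟩ := S.exists_add_mem_mem_orthogonal x
  have hyz : ⟪y, z⟫ = 0 := Submodule.inner_right_of_mem_orthogonal hyS hzS
  have hnorm : ‖y‖ ^ 2 + ‖z‖ ^ 2 = 1 := by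
    have h := norm_add_sq (𝕜 := ℂ) y z
    rw [hyz] at h
    simp only [map_zero, mul_zero, add_zero] at h
    rw [hxn] at h
    linarith [h]
  have hs0 : 0 ≤ ‖y‖ := norm_nonneg _
  have ht0 : 0 ≤ ‖z‖ := norm_nonneg _
  have hs1 : ‖y‖ ≤ 1 := by nlinarith
  -- H₂ facts
  have hH₂y : H₂ y = 0 := hS y hyS
  have hH₂adj : ContinuousLinearMap.adjoint H₂ = H₂ := hH₂
  have hyH₂z : ⟪y, H₂ z⟫ = 0 := by
    rw [← hH₂adj, ContinuousLinearMap.adjoint_inner_right, hH₂y, inner_zero_left]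
  have hH₂x : ⟪y + z, H₂ (y + z)⟫ = ⟪z, H₂ z⟫ := by
    rw [map_add, hH₂y, zero_add, inner_add_left, hyH₂z, zero_add]
  have hH₂bound : J * ‖z‖ ^ 2 ≤ (⟪y + z, H₂ (y + z)⟫).re := by
    rw [hH₂x]; exact hSperp z hzS
  -- H₁ expansion
  have hH₁x : ⟪y + z, H₁ (y + z)⟫ =
      ⟪y, H₁ y⟫ + ⟪y, H₁ z⟫ + ⟪z, H₁ y⟫ + ⟪z, H₁ z⟫ := by
    rw [map_add, inner_add_left, inner_add_right, inner_add_right]; ring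
  -- cross term bounds
  have cross : ∀ u v : EuclideanSpace ℂ (Fin n), -(K * ‖u‖ * ‖v‖) ≤ (⟪u, H₁ v⟫).re := by
    intro u v
    have h1 : ‖(⟪u, H₁ v⟫ : ℂ)‖ ≤ K * ‖u‖ * ‖v‖ := by
      calc ‖(⟪u, H₁ v⟫ : ℂ)‖ ≤ ‖u‖ * ‖H₁ v‖ := norm_inner_le_norm _ _
        _ ≤ ‖u‖ * (‖H₁‖ * ‖v‖) := by gcongr; exact H₁.le_opNorm v
        _ = K * ‖u‖ * ‖v‖ := by rw [hK]; ring
    have h3 : |(⟪u, H₁ v⟫ : ℂ).re| ≤ ‖(⟪u, H₁ v⟫ : ℂ)‖ := by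
      exact Complex.abs_re_le_norm _
    have h4 := neg_abs_le (⟪u, H₁ v⟫ : ℂ).re
    linarith
  -- Rayleigh bound on y
  have hRay : a * ‖y‖ ^ 2 ≤ (⟪y, H₁ y⟫).re := by
    rcases eq_or_ne y 0 with rfl | hy0
    · simp
    · have hsy : ‖y‖ ≠ 0 := norm_ne_zero_iff.mpr hy0
      set u : EuclideanSpace ℂ (Fin n) := ((‖y‖ : ℂ)⁻¹) • y with hu
      have huS : u ∈ S := S.smul_mem _ hyS
      have hun : ‖u‖ = 1 := by
        rw [hu, norm_smul]
        simp only [norm_inv, Complex.norm_real, norm_norm]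
        field_simp
      have h1 := ha_min u huS hun
      have hexp : ⟪u, (H₁ + H₂) u⟫ = ((‖y‖ : ℂ)⁻¹ * (‖y‖ : ℂ)⁻¹) * ⟪y, H₁ y⟫ := by
        rw [hu]
        simp only [ContinuousLinearMap.add_apply, map_smul, hH₂y, smul_zero, add_zero,
          inner_smul_left, inner_smul_right]
        rw [map_inv₀, Complex.conj_ofReal]
        ring
      rw [hexp] at h1
      have hre : (((‖y‖ : ℂ)⁻¹ * (‖y‖ : ℂ)⁻¹) * ⟪y, H₁ y⟫).re
          = ‖y‖⁻¹ * ‖y‖⁻¹ * (⟪y, H₁ y⟫).re := by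
        have he : ((‖y‖ : ℂ)⁻¹ * (‖y‖ : ℂ)⁻¹) = ((‖y‖⁻¹ * ‖y‖⁻¹ : ℝ) : ℂ) := by
          push_cast; ring
        rw [he, Complex.re_ofReal_mul]
      rw [hre] at h1
      calc a * ‖y‖ ^ 2 ≤ (‖y‖⁻¹ * ‖y‖⁻¹ * (⟪y, H₁ y⟫).re) * ‖y‖ ^ 2 :=
            mul_le_mul_of_nonneg_right h1 (sq_nonneg _)
        _ = ((‖y‖⁻¹ * ‖y‖) * (‖y‖⁻¹ * ‖y‖)) * (⟪y, H₁ y⟫).re := by ring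
        _ = (⟪y, H₁ y⟫).re := by rw [inv_mul_cancel₀ hsy]; ring
  -- assemble
  have hmain : a * ‖y‖ ^ 2 - 2 * (K * ‖y‖ * ‖z‖) - K * (‖z‖ * ‖z‖) + J * ‖z‖ ^ 2 ≤ a' := by
    rw [← hxa]
    have e1 : (⟪y + z, (H₁ + H₂) (y + z)⟫).re =
        (⟪y + z, H₁ (y + z)⟫).re + (⟪y + z, H₂ (y + z)⟫).re := by
      rw [ContinuousLinearMap.add_apply, inner_add_right, Complex.add_re]
    rw [e1, hH₁x]
    simp only [Complex.add_re]
    have c1 := cross y z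
    have c2 := cross z y
    have c3 := cross z z
    linarith
  have h6 : 0 ≤ (K - a) * ‖z‖ ^ 2 := mul_nonneg (sub_nonneg.mpr haK) (sq_nonneg _)
  have h7 : 0 ≤ (K * ‖z‖) * (1 - ‖y‖) := mul_nonneg (mul_nonneg hK0 ht0) (sub_nonneg.mpr hs1)
  have h5 : a - a' ≤ 2 * K * ‖z‖ - (J - 2 * K) * ‖z‖ ^ 2 := by nlinarith [hmain, hnorm, h6, h7]
  have h8 := mul_le_mul_of_nonneg_right h5 hJ'.le
  have hgoal : (a - a') * (J - 2 * K) ≤ K ^ 2 := by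
    nlinarith [h8, sq_nonneg ((J - 2 * K) * ‖z‖ - K)]
  have hfin := (le_div_iff₀ hJ').mpr hgoal
  linarith
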